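/- Every downset D in a polyhedral partially ordered abelian group Q is the union over faces τ of Q_+ of its local τ-supports Γ_τ(D_τ), where D_τ = {q ∈ D : q + τ ⊆ D} and Γ_τ(D_τ) = {q ∈ D_τ : q ∉ (D_τ)_{τ'} for all faces τ' ⊄ τ}. -/

import Mathlib

variable {Q : Type} [AddCommGroup Q]

/-- The partial order induced by a positive cone: `a ≼ b` iff `b - a` lies in the
cone. -/
def cle (Qp : AddSubmonoid Q) (a b : Q) : Prop := b - a ∈ Qp

/-- The positive cone has trivial unit group. -/
def TrivUnits (Qp : AddSubmonoid Q) : Prop := ∀ x ∈ Qp, -x ∈ Qp → x = 0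

/-- A face of the positive cone: a submonoid of `Qp` whose complement in `Qp` is a
monoid ideal of `Qp`. -/
def IsFace (Qp σ : AddSubmonoid Q) : Prop :=
  σ ≤ Qp ∧ ∀ x ∈ Qp, ∀ y ∈ Qp, x + y ∈ σ → x ∈ σ

/-- A downset for the cone order. -/
def IsDown (Qp : AddSubmonoid Q) (D : Set Q) : Prop :=
  ∀ a b : Q, cle Qp a b → b ∈ D → a ∈ D

/-- The localization of a subset `S` along a face `τ`:
the elements `q ∈ S` with `q + τ ⊆ S`. -/
def loc (Qp : AddSubmonoid Q) (S : Set Q) (τ : AddSubmonoid Q) : Set Q :=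
  {q | q ∈ S ∧ ∀ f ∈ τ, q + f ∈ S}

/-- The face generated by a submonoid `N ≤ Qp`: elements of `Qp` that admit a
complement in `Qp` landing in `N`. -/
def faceGen (Qp N : AddSubmonoid Q) : AddSubmonoid Q where
  carrier := {x | x ∈ Qp ∧ ∃ y ∈ Qp, x + y ∈ N}
  zero_mem' := ⟨Qp.zero_mem, 0, Qp.zero_mem, by simpa using N.zero_mem⟩
  add_mem' := by
    rintro a b ⟨ha, y, hy, hay⟩ ⟨hb, z, hz, hbz⟩
    refine ⟨Qp.add_mem ha hb, y + z, Qp.add_mem hy hz, ?_⟩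
    have : (a + y) + (b + z) ∈ N := N.add_mem hay hbz
    convert this using 1
    abel

theorem faceGen_isFace (Qp N : AddSubmonoid Q) : IsFace Qp (faceGen Qp N) := by
  constructor
  · intro x hx; exact hx.1
  · rintro x hx y hy ⟨-, z, hz, hxyz⟩
    exact ⟨hx, y + z, Qp.add_mem hy hz, by rw [← add_assoc]; exact hxyz⟩

theorem le_faceGen (Qp N : AddSubmonoid Q) (hN : N ≤ Qp) : N ≤ faceGen Qp N := by
  intro x hx
  exact ⟨hN hx, 0, Qp.zero_mem, by simpa using hx⟩

/-- Every downset `D` in a polyhedral partially ordered abelian group is the union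
over faces `τ` of its local `τ`-supports `Γ_τ(D_τ)`: the elements of the
localization `D_τ` not lying in `(D_τ)_{τ'}` for any face `τ' ⊄ τ`. -/
theorem statement14 (Qp : AddSubmonoid Q) (htriv : TrivUnits Qp)
    (hpoly : Finite {σ : AddSubmonoid Q // IsFace Qp σ})
    (D : Set Q) (hD : IsDown Qp D) :
    D = ⋃ τ : {σ : AddSubmonoid Q // IsFace Qp σ},
          {q | q ∈ loc Qp D τ.1 ∧
            ∀ τ' : {σ : AddSubmonoid Q // IsFace Qp σ}, ¬ τ'.1 ≤ τ.1 →
              q ∉ loc Qp (loc Qp D τ.1) τ'.1} := by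
  ext q
  simp only [Set.mem_iUnion, Set.mem_setOf_eq]
  constructor
  · intro hq
    -- the set of faces along which q localizes
    set T : Set (AddSubmonoid Q) := {σ | IsFace Qp σ ∧ q ∈ loc Qp D σ} with hT
    have hfin : T.Finite := by
      have h1 : {σ | IsFace Qp σ}.Finite := Set.finite_coe_iff.mp hpoly
      exact h1.subset fun σ hσ => hσ.1
    have hbot : (⊥ : AddSubmonoid Q) ∈ T := by
      refine ⟨⟨bot_le, fun x hx y hy hxy => ?_⟩, hq, fun f hf => ?_⟩
      · have hxy0 : x + y = 0 := hxy
        have hnx : -x ∈ Qp := by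
          rw [neg_eq_of_add_eq_zero_right hxy0]; exact hy
        exact htriv x hx hnx
      · have : f = 0 := hf
        simpa [this] using hq
    obtain ⟨τ, hτT, hmax⟩ :=
      Set.Finite.exists_maximalFor id T hfin ⟨⊥, hbot⟩
    refine ⟨⟨τ, hτT.1⟩, hτT.2, ?_⟩
    rintro ⟨τ', hτ'⟩ hne hmem
    -- hmem : q localizes along τ ⊔ τ', hence along the face it generates
    set F := faceGen Qp (τ ⊔ τ') with hF
    have hqF : q ∈ loc Qp D F := by
      refine ⟨hq, ?_⟩
      rintro x ⟨hxQp, y, hy, hxy⟩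
      rw [AddSubmonoid.mem_sup] at hxy
      obtain ⟨f, hf, f', hf', hff'⟩ := hxy
      have h1 : q + f' ∈ loc Qp D τ := hmem.2 f' hf'
      have h2 : q + f' + f ∈ D := h1.2 f hf
      have h3 : q + x + y = q + f' + f := by rw [add_assoc, ← hff']; abel
      refine hD (q + x) (q + f' + f) ?_ h2
      show q + f' + f - (q + x) ∈ Qp
      rw [← h3]
      simpa using hy
    have hFT : F ∈ T := ⟨faceGen_isFace Qp (τ ⊔ τ'), hqF⟩
    have hτF : τ ≤ F := le_trans le_sup_left
      (le_faceGen Qp (τ ⊔ τ') (sup_le hτT.1.1 hτ'.1))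
    have : τ = F := le_antisymm hτF (hmax hFT hτF)
    have hτ'F : τ' ≤ F := le_trans le_sup_right
      (le_faceGen Qp (τ ⊔ τ') (sup_le hτT.1.1 hτ'.1))
    exact hne (le_trans hτ'F this.ge)
  · rintro ⟨τ, ⟨hqD, -⟩, -⟩
    exact hqD
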